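/- Let q₁, q₂ : [0,π] → ℝ be continuous with q₁(t) ≤ q₂(t) for all t and q₁ ≢ q₂ (strict inequality on some open subinterval). Let W₁, W₂ be the Prüfer arguments of the solutions of −v'' + q_i v = 0, v(0)=0, v'(0)=1. Then W₂(π) ≤ W₁(π), with strict inequality W₂(π) < W₁(π) provided sin(W₂(t)) is not identically zero on the set where q₁ < q₂. -/

import Mathlib

open Real Set

/-- The squared sine is 1-Lipschitz. -/
lemma lipschitz_sin_sq : LipschitzWith 1 (fun w : ℝ => sin w ^ 2) := by
  apply lipschitzWith_of_nnnorm_deriv_le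
  · exact fun x => (Real.differentiable_sin x).pow 2
  · intro x
    have hd : HasDerivAt (fun w : ℝ => sin w ^ 2) (2 * sin x * cos x) x := by
      have := (Real.hasDerivAt_sin x).pow 2
      exact this.congr_deriv (by ring)
    rw [hd.deriv]
    have : (2 : ℝ) * sin x * cos x = sin (2 * x) := (Real.sin_two_mul x).symm
    rw [this]
    simpa [← NNReal.coe_le_coe, Real.norm_eq_abs] using Real.abs_sin_le_one (2 * x)

lemma abs_sin_sq_sub_le (a b : ℝ) : |sin a ^ 2 - sin b ^ 2| ≤ |a - b| := by
  have := lipschitz_sin_sq.dist_le_mul a b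
  simpa [Real.dist_eq] using this

/-- If `f 0 = 0`, `f` is continuous on `[0,b]`, and `f` has nonnegative derivative at every
interior point where `f` is negative, then `f` is nonnegative on `[0,b]`. -/
lemma nonneg_of_deriv_nonneg_on_neg (f : ℝ → ℝ) (b : ℝ) (hf0 : f 0 = 0)
    (hcont : ContinuousOn f (Icc 0 b))
    (hd : ∀ t ∈ Ioo (0:ℝ) b, f t < 0 → ∃ d, 0 ≤ d ∧ HasDerivAt f d t) :
    ∀ t ∈ Icc (0:ℝ) b, 0 ≤ f t := by
  intro t ht
  by_contra hneg
  push_neg at hneg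
  have h0t : (0:ℝ) ≤ t := ht.1
  have htb : t ≤ b := ht.2
  have hIcc : Icc (0:ℝ) t ⊆ Icc 0 b := Icc_subset_Icc le_rfl htb
  have hcont' : ContinuousOn f (Icc 0 t) := hcont.mono hIcc
  set S : Set ℝ := {s | s ∈ Icc (0:ℝ) t ∧ f s = 0} with hS
  have hS0 : 0 ∈ S := ⟨⟨le_refl 0, h0t⟩, hf0⟩
  have hSclosed : IsClosed S := by
    have : S = Icc (0:ℝ) t ∩ f ⁻¹' {0} := by
      ext x; simp [hS, Set.mem_inter_iff]
    rw [this]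
    exact hcont'.preimage_isClosed_of_isClosed isClosed_Icc isClosed_singleton
  have hScomp : IsCompact S := IsCompact.of_isClosed_subset isCompact_Icc hSclosed (fun x hx => hx.1)
  set τ := sSup S with hτdef
  have hτS : τ ∈ S := hScomp.sSup_mem ⟨0, hS0⟩
  have hτt : τ ≤ t := hτS.1.2
  have hτ0 : 0 ≤ τ := hτS.1.1
  have hfτ : f τ = 0 := hτS.2
  have hτlt : τ < t := lt_of_le_of_ne hτt (fun he => by rw [he] at hfτ; linarith)
  -- f is negative on (τ, t]
  have hkey : ∀ s ∈ Ioc τ t, f s < 0 := by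
    intro s hs
    by_contra hfs
    push_neg at hfs
    have hs0 : 0 ≤ s := le_trans hτ0 hs.1.le
    have hst : s ≤ t := hs.2
    have hcont'' : ContinuousOn f (Icc s t) :=
      hcont'.mono (Icc_subset_Icc hs0 le_rfl)
    have h0mem : (0:ℝ) ∈ Icc (f t) (f s) := ⟨hneg.le, hfs⟩
    obtain ⟨z, hz, hfz⟩ := intermediate_value_Icc' hst hcont'' h0mem
    have hzS : z ∈ S := ⟨⟨le_trans hs0 hz.1, hz.2⟩, hfz⟩
    have : z ≤ τ := le_csSup hScomp.bddAbove hzS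
    exact absurd (lt_of_lt_of_le hs.1 (le_trans hz.1 this)) (lt_irrefl τ)
  -- f is monotone on [τ, t]
  have hmono : MonotoneOn f (Icc τ t) := by
    have hint : interior (Icc τ t) = Ioo τ t := interior_Icc
    have hder : ∀ x ∈ Ioo τ t, ∃ d, 0 ≤ d ∧ HasDerivAt f d x := by
      intro x hx
      have hfx : f x < 0 := hkey x ⟨hx.1, hx.2.le⟩
      exact hd x ⟨lt_of_le_of_lt hτ0 hx.1, lt_of_lt_of_le hx.2 htb⟩ hfx
    apply monotoneOn_of_deriv_nonneg (convex_Icc τ t)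
      (hcont'.mono (Icc_subset_Icc hτ0 le_rfl))
    · rw [hint]
      intro x hx
      obtain ⟨d, _, hdx⟩ := hder x hx
      exact hdx.differentiableAt.differentiableWithinAt
    · rw [hint]
      intro x hx
      obtain ⟨d, hd0, hdx⟩ := hder x hx
      rw [hdx.deriv]; exact hd0
  have : f τ ≤ f t := hmono ⟨le_refl τ, hτlt.le⟩ ⟨hτlt.le, le_refl t⟩ hτlt.le
  rw [hfτ] at this
  linarith

/-- Sturm comparison for the Prüfer argument: if q₁ ≤ q₂ with strict
inequality on some open subinterval, then W₂(π) ≤ W₁(π), strictly so unless sin W₂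
vanishes identically where q₁ < q₂. -/
theorem prufer_comparison (q₁ q₂ W₁ W₂ : ℝ → ℝ)
    (hq₁ : ContinuousOn q₁ (Icc 0 π)) (hq₂ : ContinuousOn q₂ (Icc 0 π))
    (hle : ∀ t ∈ Icc (0:ℝ) π, q₁ t ≤ q₂ t)
    (hne : ∃ s t : ℝ, s < t ∧ Ioo s t ⊆ Icc (0:ℝ) π ∧ ∀ x ∈ Ioo s t, q₁ x < q₂ x)
    (hW₁0 : W₁ 0 = 0) (hW₂0 : W₂ 0 = 0)
    (hW₁ : ∀ t ∈ Icc (0:ℝ) π,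
      HasDerivWithinAt W₁ (cos (W₁ t) ^ 2 - q₁ t * sin (W₁ t) ^ 2) (Icc 0 π) t)
    (hW₂ : ∀ t ∈ Icc (0:ℝ) π,
      HasDerivWithinAt W₂ (cos (W₂ t) ^ 2 - q₂ t * sin (W₂ t) ^ 2) (Icc 0 π) t) :
    W₂ π ≤ W₁ π ∧
    ((¬ ∀ t ∈ Icc (0:ℝ) π, q₁ t < q₂ t → sin (W₂ t) = 0) → W₂ π < W₁ π) := by
  have hπ : (0:ℝ) < π := Real.pi_pos
  have hπmem : π ∈ Icc (0:ℝ) π := ⟨hπ.le, le_refl π⟩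
  have h0mem : (0:ℝ) ∈ Icc (0:ℝ) π := ⟨le_refl 0, hπ.le⟩
  -- continuity of W₁, W₂ on Icc
  have hW₁c : ContinuousOn W₁ (Icc 0 π) := fun t ht => (hW₁ t ht).continuousWithinAt
  have hW₂c : ContinuousOn W₂ (Icc 0 π) := fun t ht => (hW₂ t ht).continuousWithinAt
  -- Lipschitz constant
  obtain ⟨C, hC⟩ := (isCompact_Icc).exists_bound_of_continuousOn
    ((continuousOn_const.add hq₁))
  set L : ℝ := max C 1 with hLdef
  have hL1 : (1:ℝ) ≤ L := le_max_right C 1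
  have hL0 : (0:ℝ) < L := lt_of_lt_of_le one_pos hL1
  have hLb : ∀ t ∈ Icc (0:ℝ) π, |1 + q₁ t| ≤ L := by
    intro t ht
    calc |1 + q₁ t| = ‖(1 : ℝ) + q₁ t‖ := rfl
      _ ≤ C := hC t ht
      _ ≤ L := le_max_left C 1
  -- the difference and its derivative
  set D : ℝ → ℝ := fun t => W₁ t - W₂ t with hDdef
  set d₁ : ℝ → ℝ := fun t => cos (W₁ t) ^ 2 - q₁ t * sin (W₁ t) ^ 2 with hd₁def
  set d₂ : ℝ → ℝ := fun t => cos (W₂ t) ^ 2 - q₂ t * sin (W₂ t) ^ 2 with hd₂def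
  set h : ℝ → ℝ := fun t => (q₂ t - q₁ t) * sin (W₂ t) ^ 2 with hhdef
  have hD0 : D 0 = 0 := by simp [hDdef, hW₁0, hW₂0]
  have hDc : ContinuousOn D (Icc 0 π) := hW₁c.sub hW₂c
  have hDd : ∀ t ∈ Icc (0:ℝ) π, HasDerivWithinAt D (d₁ t - d₂ t) (Icc 0 π) t :=
    fun t ht => (hW₁ t ht).sub (hW₂ t ht)
  have hh0 : ∀ t ∈ Icc (0:ℝ) π, 0 ≤ h t := by
    intro t ht
    exact mul_nonneg (sub_nonneg.mpr (hle t ht)) (sq_nonneg _)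
  -- algebraic identity for the derivative difference
  have hiden : ∀ t, d₁ t - d₂ t
      = -((1 + q₁ t) * (sin (W₁ t) ^ 2 - sin (W₂ t) ^ 2)) + h t := by
    intro t
    have h1 : cos (W₁ t) ^ 2 = 1 - sin (W₁ t) ^ 2 := by
      rw [← Real.sin_sq_add_cos_sq (W₁ t)]; ring
    have h2 : cos (W₂ t) ^ 2 = 1 - sin (W₂ t) ^ 2 := by
      rw [← Real.sin_sq_add_cos_sq (W₂ t)]; ring
    simp only [hd₁def, hd₂def, hhdef, h1, h2]
    ring
  -- pointwise lower bound: d₁ - d₂ ≥ -L * |D| + h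
  have hbound : ∀ t ∈ Icc (0:ℝ) π, -(L * |D t|) + h t ≤ d₁ t - d₂ t := by
    intro t ht
    rw [hiden t]
    have hs : |sin (W₁ t) ^ 2 - sin (W₂ t) ^ 2| ≤ |D t| := abs_sin_sq_sub_le _ _
    have : |(1 + q₁ t) * (sin (W₁ t) ^ 2 - sin (W₂ t) ^ 2)| ≤ L * |D t| := by
      rw [abs_mul]
      exact mul_le_mul (hLb t ht) hs (abs_nonneg _) (le_trans (abs_nonneg _) (hLb t ht))
    have h2 := le_abs_self ((1 + q₁ t) * (sin (W₁ t) ^ 2 - sin (W₂ t) ^ 2))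
    linarith
  -- Step 1: D ≥ 0 on [0, π], via ψ t = D t * exp (-(L * t))
  have hDnonneg : ∀ t ∈ Icc (0:ℝ) π, 0 ≤ D t := by
    set ψ : ℝ → ℝ := fun t => D t * Real.exp (-(L * t)) with hψdef
    have hψnonneg : ∀ t ∈ Icc (0:ℝ) π, 0 ≤ ψ t := by
      apply nonneg_of_deriv_nonneg_on_neg ψ π
      · simp [hψdef, hD0]
      · exact hDc.mul (Real.continuous_exp.comp ((continuous_const.mul continuous_id).neg)).continuousOn
      · intro t ht hψt
        have htmem : t ∈ Icc (0:ℝ) π := ⟨ht.1.le, ht.2.le⟩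
        have hnhds : Icc (0:ℝ) π ∈ nhds t := Icc_mem_nhds ht.1 ht.2
        have hDt : HasDerivAt D (d₁ t - d₂ t) t := (hDd t htmem).hasDerivAt hnhds
        have hexp : HasDerivAt (fun s => Real.exp (-(L * s))) (-L * Real.exp (-(L * t))) t := by
          have h1 : HasDerivAt (fun s : ℝ => -(L * s)) (-L) t := by
            exact (((hasDerivAt_id t).const_mul L).neg).congr_deriv (by ring)
          exact ((Real.hasDerivAt_exp (-(L * t))).comp t h1).congr_deriv (by ring : _ = -L * Real.exp (-(L * t)))
        have hψd : HasDerivAt ψ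
            ((d₁ t - d₂ t) * Real.exp (-(L * t)) + D t * (-L * Real.exp (-(L * t)))) t :=
          hDt.mul hexp
        refine ⟨_, ?_, hψd⟩
        -- D t < 0 here, so |D t| = -D t and the bound gives nonnegativity
        have hexp_pos : 0 < Real.exp (-(L * t)) := Real.exp_pos _
        have hDneg : D t < 0 := by
          by_contra hc
          push_neg at hc
          exact absurd (mul_nonneg hc hexp_pos.le) (not_le.mpr hψt)
        have habs : |D t| = -D t := abs_of_neg hDneg
        have hb := hbound t htmem
        rw [habs] at hb
        have hh := hh0 t htmem
        have : L * D t ≤ d₁ t - d₂ t := by linarith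
        nlinarith
    intro t ht
    have := hψnonneg t ht
    have hexp_pos : 0 < Real.exp (-(L * t)) := Real.exp_pos _
    by_contra hc
    push_neg at hc
    exact absurd this (not_le.mpr (mul_neg_of_neg_of_pos hc hexp_pos))
  have hweak : W₂ π ≤ W₁ π := by
    have := hDnonneg π hπmem
    simp only [hDdef] at this
    linarith
  refine ⟨hweak, ?_⟩
  -- Step 2: strict inequality
  intro hnz
  push_neg at hnz
  obtain ⟨t₀, ht₀mem, hq, hsin⟩ := hnz
  -- set φ t = D t * exp (L * t); it is monotone on [0,π] and strictly increasing near t₀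
  set φ : ℝ → ℝ := fun t => D t * Real.exp (L * t) with hφdef
  have hφc : ContinuousOn φ (Icc 0 π) :=
    hDc.mul (Real.continuous_exp.comp (continuous_const.mul continuous_id)).continuousOn
  have hφd : ∀ t ∈ Ioo (0:ℝ) π,
      HasDerivAt φ ((d₁ t - d₂ t) * Real.exp (L * t) + D t * (L * Real.exp (L * t))) t := by
    intro t ht
    have htmem : t ∈ Icc (0:ℝ) π := ⟨ht.1.le, ht.2.le⟩
    have hnhds : Icc (0:ℝ) π ∈ nhds t := Icc_mem_nhds ht.1 ht.2
    have hDt : HasDerivAt D (d₁ t - d₂ t) t := (hDd t htmem).hasDerivAt hnhds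
    have hexp : HasDerivAt (fun s => Real.exp (L * s)) (L * Real.exp (L * t)) t := by
      have h1 : HasDerivAt (fun s : ℝ => L * s) L t := by
        simpa using (hasDerivAt_id t).const_mul L
      exact ((Real.hasDerivAt_exp (L * t)).comp t h1).congr_deriv (by ring)
    exact hDt.mul hexp
  have hφd_lb : ∀ t ∈ Ioo (0:ℝ) π,
      Real.exp (L * t) * h t ≤ (d₁ t - d₂ t) * Real.exp (L * t) + D t * (L * Real.exp (L * t)) := by
    intro t ht
    have htmem : t ∈ Icc (0:ℝ) π := ⟨ht.1.le, ht.2.le⟩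
    have hb := hbound t htmem
    have hDn : 0 ≤ D t := hDnonneg t htmem
    have habs : |D t| = D t := abs_of_nonneg hDn
    rw [habs] at hb
    have hexp_pos : 0 < Real.exp (L * t) := Real.exp_pos _
    nlinarith
  -- monotonicity of φ on [0, π]
  have hφmono : MonotoneOn φ (Icc 0 π) := by
    apply monotoneOn_of_deriv_nonneg (convex_Icc 0 π) hφc
    · rw [interior_Icc]
      intro x hx
      exact (hφd x hx).differentiableAt.differentiableWithinAt
    · rw [interior_Icc]
      intro x hx
      rw [(hφd x hx).deriv]
      have := hφd_lb x hx
      have hh := hh0 x ⟨hx.1.le, hx.2.le⟩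
      nlinarith [Real.exp_pos (L * x)]
  -- h is continuous on Icc and positive at t₀
  have hhc : ContinuousOn h (Icc 0 π) := by
    apply ContinuousOn.mul (hq₂.sub hq₁)
    exact (Real.continuous_sin.comp_continuousOn hW₂c).pow 2
  have hht₀ : 0 < h t₀ := by
    apply mul_pos (sub_pos.mpr hq)
    exact lt_of_le_of_ne (sq_nonneg _) (Ne.symm (pow_ne_zero 2 hsin))
  -- find a closed interval [a,b] ⊆ [0,π] with a < b on which h > 0
  obtain ⟨ε, hε, hball⟩ : ∃ ε > 0, ∀ s ∈ Icc (0:ℝ) π, |s - t₀| < ε → 0 < h s := by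
    have hcw : ContinuousWithinAt h (Icc 0 π) t₀ := hhc t₀ ht₀mem
    rw [Metric.continuousWithinAt_iff] at hcw
    obtain ⟨ε, hε, hcw⟩ := hcw (h t₀) hht₀
    refine ⟨ε, hε, fun s hs hd => ?_⟩
    have := hcw hs (by rwa [Real.dist_eq])
    rw [Real.dist_eq] at this
    have := abs_lt.mp this
    linarith [this.1]
  obtain ⟨a, b, hab, haIcc, hbIcc, hhab⟩ :
      ∃ a b : ℝ, a < b ∧ a ∈ Icc (0:ℝ) π ∧ b ∈ Icc (0:ℝ) π ∧
        ∀ s ∈ Icc a b, 0 < h s := by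
    rcases lt_or_eq_of_le ht₀mem.2 with ht₀π | ht₀π
    · refine ⟨t₀, min π (t₀ + ε / 2), lt_min ht₀π (by linarith), ht₀mem,
        ⟨le_trans ht₀mem.1 (le_min ht₀π.le (by linarith)), min_le_left _ _⟩, ?_⟩
      intro s hs
      have hs1 : t₀ ≤ s := hs.1
      have hs2 : s ≤ t₀ + ε / 2 := le_trans hs.2 (min_le_right _ _)
      have hsmem : s ∈ Icc (0:ℝ) π := ⟨le_trans ht₀mem.1 hs1, le_trans hs.2 (min_le_left _ _)⟩
      exact hball s hsmem (abs_lt.mpr ⟨by linarith, by linarith⟩)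
    · refine ⟨max 0 (π - ε / 2), π, max_lt hπ (by linarith), ⟨le_max_left _ _,
        max_le hπ.le (by linarith)⟩, hπmem, ?_⟩
      intro s hs
      have hs1 : π - ε / 2 ≤ s := le_trans (le_max_right _ _) hs.1
      have hsmem : s ∈ Icc (0:ℝ) π := ⟨le_trans (le_max_left _ _) hs.1, hs.2⟩
      refine hball s hsmem (abs_lt.mpr ⟨?_, ?_⟩) <;> rw [ht₀π] <;>
        [linarith [hs.2]; linarith [hs.2]]
  -- φ is strictly monotone on [a,b]
  have habsub : Icc a b ⊆ Icc (0:ℝ) π := Icc_subset_Icc haIcc.1 hbIcc.2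
  have hφstrict : StrictMonoOn φ (Icc a b) := by
    apply strictMonoOn_of_deriv_pos (convex_Icc a b) (hφc.mono habsub)
    rw [interior_Icc]
    intro x hx
    have hxIoo : x ∈ Ioo (0:ℝ) π :=
      ⟨lt_of_le_of_lt haIcc.1 hx.1, lt_of_lt_of_le hx.2 hbIcc.2⟩
    rw [(hφd x hxIoo).deriv]
    have hlb := hφd_lb x hxIoo
    have hhx : 0 < h x := hhab x ⟨hx.1.le, hx.2.le⟩
    nlinarith [Real.exp_pos (L * x)]
  have hφa : 0 ≤ φ a :=
    mul_nonneg (hDnonneg a haIcc) (Real.exp_pos _).le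
  have hφab : φ a < φ b := hφstrict ⟨le_refl a, hab.le⟩ ⟨hab.le, le_refl b⟩ hab
  have hφbπ : φ b ≤ φ π := hφmono hbIcc hπmem hbIcc.2
  have hφπ : 0 < φ π := lt_of_le_of_lt hφa (lt_of_lt_of_le hφab hφbπ)
  have hDπ : 0 < D π := by
    by_contra hc
    push_neg at hc
    exact absurd hφπ (not_lt.mpr (mul_nonpos_of_nonpos_of_nonneg hc (Real.exp_pos _).le))
  simp only [hDdef] at hDπ
  linarith
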